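/- Let 0 < P_fa < P_d < 1, and let α_1,…,α_k ∈ [0,1] and flipping probabilities P_{1,0}^j, P_{0,1}^j ∈ [0,1] (j = 1,…,k) be given. With β_{1,0} = Σ_{j=1}^k α_j P_{1,0}^j, β_{0,1} = Σ_{j=1}^k α_j P_{0,1}^j, π_{1,0} = β_{1,0}(1−P_fa) + (1−β_{0,1})P_fa and π_{1,1} = β_{1,0}(1−P_d) + (1−β_{0,1})P_d, one has π_{1,0} = π_{1,1} if and only if Σ_{j=1}^k α_j (P_{1,0}^j + P_{0,1}^j) = 1. -/
import Mathlib

open Finset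

/-- Blinding condition: with `0 < P_fa < P_d < 1`, the received-bit probabilities under the
two hypotheses coincide (`π₁₀ = π₁₁`) iff `∑ αⱼ (P₁₀ʲ + P₀₁ʲ) = 1`. -/
theorem stmt_0 (k : ℕ) (α P10 P01 : ℕ → ℝ) (Pfa Pd : ℝ)
    (hPfa : 0 < Pfa) (hPfaPd : Pfa < Pd) (hPd : Pd < 1)
    (hα : ∀ j < k, α j ∈ Set.Icc (0 : ℝ) 1)
    (hP10 : ∀ j < k, P10 j ∈ Set.Icc (0 : ℝ) 1)
    (hP01 : ∀ j < k, P01 j ∈ Set.Icc (0 : ℝ) 1)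
    (β10 β01 π10 π11 : ℝ)
    (hβ10 : β10 = ∑ j ∈ range k, α j * P10 j)
    (hβ01 : β01 = ∑ j ∈ range k, α j * P01 j)
    (hπ10 : π10 = β10 * (1 - Pfa) + (1 - β01) * Pfa)
    (hπ11 : π11 = β10 * (1 - Pd) + (1 - β01) * Pd) :
    π10 = π11 ↔ ∑ j ∈ range k, α j * (P10 j + P01 j) = 1 := by
  have hsum : ∑ j ∈ range k, α j * (P10 j + P01 j) = β10 + β01 := by
    rw [hβ10, hβ01, ← Finset.sum_add_distrib]
    exact Finset.sum_congr rfl fun j _ => by ring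
  rw [hsum, hπ10, hπ11]
  constructor
  · intro h
    have hne : Pd - Pfa ≠ 0 := by linarith
    have : (Pd - Pfa) * (β10 + β01 - 1) = 0 := by linarith [h]
    have := mul_eq_zero.mp this
    rcases this with h1 | h2
    · exact absurd h1 hne
    · linarith
  · intro h
    nlinarith [h]
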